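/- Let w ∈ ℍ, b ≥ 1, and θ, α ∈ ℝ. Then, as ε → 0⁺, g_{w,ε,θ}(w + (bε/4)e^{i(α+θ)}) = w + (ε/4)e^{i(θ+π/2)}(b + 1/b)·sin α + (ε/4)e^{iθ}(b − 1/b)·cos α − (ε²/16)·e^{2iθ}/w − (ε²/16)·e^{−2iθ}/w̄ + (ε²/16)·e^{−2iθ}/(w̄ − w) + O(ε³). In particular, to leading order in ε the image of the circle of radius bε/4 centered at w is an ellipse centered at w with major axis (b + 1/b)ε/2 (making angle θ with the positive imaginary direction) and minor axis (b − 1/b)ε/2. -/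

import Mathlib

open Complex Real Filter Asymptotics

set_option maxHeartbeats 1600000 in
/-- Expansion of `g_{w,ε,θ}(w + (bε/4)e^{i(α+θ)})` as `ε → 0⁺`: the image of the circle
of radius `bε/4` centered at `w` is, to order `ε³`, an ellipse centered at `w` (shifted
by explicit `ε²` terms) with major axis `(b+1/b)ε/2` at angle `θ` to the positive
imaginary direction and minor axis `(b-1/b)ε/2`. -/
theorem stmt7 (w : ℂ) (hw : 0 < w.im) (b : ℝ) (hb : 1 ≤ b) (θ α : ℝ)
    (g : ℝ → ℂ → ℂ)
    (hg : ∀ (ε : ℝ) (z : ℂ), g ε z = z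
        + ((ε : ℂ) ^ 2 / 16) * Complex.exp (2 * (θ : ℂ) * Complex.I) / (w - z)
        + ((ε : ℂ) ^ 2 / 16) * Complex.exp (-(2 * (θ : ℂ)) * Complex.I) / (starRingEnd ℂ w - z)
        - ((ε : ℂ) ^ 2 / 16) * Complex.exp (2 * (θ : ℂ) * Complex.I) / w
        - ((ε : ℂ) ^ 2 / 16) * Complex.exp (-(2 * (θ : ℂ)) * Complex.I) / starRingEnd ℂ w) :
    (fun ε : ℝ =>
        g ε (w + ((b : ℂ) * (ε : ℂ) / 4) * Complex.exp (((α : ℂ) + (θ : ℂ)) * Complex.I))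
          - (w
            + ((ε : ℂ) / 4) * Complex.exp (((θ : ℂ) + (π : ℂ) / 2) * Complex.I)
                * ((b : ℂ) + 1 / (b : ℂ)) * (Real.sin α : ℂ)
            + ((ε : ℂ) / 4) * Complex.exp ((θ : ℂ) * Complex.I)
                * ((b : ℂ) - 1 / (b : ℂ)) * (Real.cos α : ℂ)
            - ((ε : ℂ) ^ 2 / 16) * Complex.exp (2 * (θ : ℂ) * Complex.I) / w
            - ((ε : ℂ) ^ 2 / 16) * Complex.exp (-(2 * (θ : ℂ)) * Complex.I) / starRingEnd ℂ w
            + ((ε : ℂ) ^ 2 / 16) * Complex.exp (-(2 * (θ : ℂ)) * Complex.I)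
                / (starRingEnd ℂ w - w)))
      =O[nhdsWithin 0 (Set.Ioi 0)] (fun ε : ℝ => ε ^ 3) := by
  have hb0 : (0:ℝ) < b := lt_of_lt_of_le one_pos hb
  have hbC : (b:ℂ) ≠ 0 := by exact_mod_cast hb0.ne'
  have hw0 : w ≠ 0 := by
    intro h; rw [h] at hw; simp at hw
  have hcw : starRingEnd ℂ w ≠ 0 := by
    simpa using hw0
  have hA : starRingEnd ℂ w - w ≠ 0 := by
    intro h
    have h2 : starRingEnd ℂ w = w := sub_eq_zero.mp h
    have := (Complex.conj_eq_iff_im).mp h2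
    exact absurd this hw.ne'
  set A : ℂ := starRingEnd ℂ w - w with hAdef
  set K : ℂ := Complex.exp (((α : ℂ) + (θ : ℂ)) * Complex.I) with hKdef
  have hKnorm : ‖K‖ = 1 := by
    rw [hKdef, show ((α : ℂ) + (θ : ℂ)) = ((α + θ : ℝ) : ℂ) by push_cast; ring]
    exact Complex.norm_exp_ofReal_mul_I _
  set G : ℝ → ℂ := fun ε =>
    Complex.exp (-(2 * (θ : ℂ)) * Complex.I) * ((b:ℂ)/4) * K /
      (16 * (A * (A - ((b:ℂ) * ε / 4) * K))) with hGdef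
  have hGcont : ContinuousAt G 0 := by
    apply ContinuousAt.div continuousAt_const
    · fun_prop
    · simp [hA]
  have hG1 : G =O[nhdsWithin 0 (Set.Ioi 0)] (fun _ : ℝ => (1:ℝ)) :=
    (hGcont.tendsto.mono_left nhdsWithin_le_nhds).isBigO_one ℝ
  have hcube : (fun ε : ℝ => ((ε:ℂ))^3) =O[nhdsWithin 0 (Set.Ioi 0)] (fun ε : ℝ => ε^3) := by
    apply Asymptotics.isBigO_of_le
    intro x
    simp [abs_pow]
  have hmul := hcube.mul hG1
  have hAabs : 0 < ‖A‖ := by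
    simpa using (norm_pos_iff.mpr hA)
  set δ : ℝ := 2 * ‖A‖ / b with hδdef
  have hδpos : 0 < δ := by
    rw [hδdef]; positivity
  clear_value A K G
  have heq : (fun ε : ℝ =>
        g ε (w + ((b : ℂ) * (ε : ℂ) / 4) * K)
          - (w
            + ((ε : ℂ) / 4) * Complex.exp (((θ : ℂ) + (π : ℂ) / 2) * Complex.I)
                * ((b : ℂ) + 1 / (b : ℂ)) * (Real.sin α : ℂ)
            + ((ε : ℂ) / 4) * Complex.exp ((θ : ℂ) * Complex.I)
                * ((b : ℂ) - 1 / (b : ℂ)) * (Real.cos α : ℂ)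
            - ((ε : ℂ) ^ 2 / 16) * Complex.exp (2 * (θ : ℂ) * Complex.I) / w
            - ((ε : ℂ) ^ 2 / 16) * Complex.exp (-(2 * (θ : ℂ)) * Complex.I) / starRingEnd ℂ w
            + ((ε : ℂ) ^ 2 / 16) * Complex.exp (-(2 * (θ : ℂ)) * Complex.I)
                / A))
      =ᶠ[nhdsWithin 0 (Set.Ioi 0)] (fun ε : ℝ => ((ε:ℂ))^3 * G ε) := by
    filter_upwards [Ioo_mem_nhdsGT_of_mem (Set.left_mem_Ico.mpr hδpos)] with ε hε
    obtain ⟨hε0, hεδ⟩ := hε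
    have hεC : (ε:ℂ) ≠ 0 := by exact_mod_cast hε0.ne'
    have hAz : A - ((b:ℂ) * ε / 4) * K ≠ 0 := by
      intro h
      have h2 : A = ((b:ℂ) * ε / 4) * K := sub_eq_zero.mp h
      have h3 : ‖A‖ = b * ε / 4 := by
        rw [h2, norm_mul, hKnorm, mul_one, norm_div, norm_mul]
        simp [Complex.norm_real, abs_of_pos hb0, abs_of_pos hε0]
      rw [hδdef, h3] at hεδ
      have h5 : 2 * (b * ε / 4) / b = ε / 2 := by
        field_simp; ring
      rw [h5] at hεδ
      linarith
    set v : ℂ := Complex.exp ((α:ℂ) * Complex.I) with hvdef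
    set E : ℂ := Complex.exp ((θ:ℂ) * Complex.I) with hEdef
    have hv : v ≠ 0 := Complex.exp_ne_zero _
    have hE : E ≠ 0 := Complex.exp_ne_zero _
    have hK : K = v * E := by
      rw [hKdef, hvdef, hEdef, ← Complex.exp_add]; ring_nf
    have h2θ : Complex.exp (2 * (θ:ℂ) * Complex.I) = E * E := by
      rw [hEdef, ← Complex.exp_add]; ring_nf
    have hm2θ : Complex.exp (-(2 * (θ:ℂ)) * Complex.I) = (E * E)⁻¹ := by
      rw [hEdef, ← Complex.exp_add, ← Complex.exp_neg]; ring_nf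
    have hpihalf : Complex.exp (((π/2 : ℝ) : ℂ) * Complex.I) = Complex.I := by
      rw [Complex.exp_mul_I, ← Complex.ofReal_cos, ← Complex.ofReal_sin,
        Real.cos_pi_div_two, Real.sin_pi_div_two]
      simp
    have hpi : Complex.exp (((θ:ℂ) + (π:ℂ)/2) * Complex.I) = E * Complex.I := by
      rw [show ((θ:ℂ) + (π:ℂ)/2) * Complex.I
            = (θ:ℂ) * Complex.I + ((π/2 : ℝ) : ℂ) * Complex.I by push_cast; ring,
        Complex.exp_add, hpihalf]
    have hv1 : v = Complex.cos α + Complex.sin α * Complex.I := by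
      rw [hvdef, Complex.exp_mul_I]
    have hv2 : v⁻¹ = Complex.cos α - Complex.sin α * Complex.I := by
      rw [hvdef, ← Complex.exp_neg,
        show -((α:ℂ) * Complex.I) = (-(α:ℂ)) * Complex.I by ring,
        Complex.exp_mul_I, Complex.cos_neg, Complex.sin_neg]
      ring
    clear_value v E
    have hsin : (Real.sin α : ℂ) = (v⁻¹ - v) * Complex.I / 2 := by
      rw [Complex.ofReal_sin, hv2, hv1]; ring_nf; rw [Complex.I_sq]; ring
    have hcos : (Real.cos α : ℂ) = (v + v⁻¹) / 2 := by
      rw [Complex.ofReal_cos, hv2, hv1]; ring_nf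
    have hGε : G ε = (E * E)⁻¹ * ((b:ℂ)/4) * (v * E) /
        (16 * (A * (A - ((b:ℂ) * ε / 4) * (v * E)))) := by
      rw [hGdef]
      simp only [hm2θ, hK]
    have claim1 : w + ((b:ℂ) * (ε:ℂ) / 4) * (v * E)
          + ((ε:ℂ)^2 / 16) * (E * E) / (-(((b:ℂ) * (ε:ℂ) / 4) * (v * E)))
        = w + ((ε:ℂ)/4) * (E * Complex.I) * ((b:ℂ) + 1/(b:ℂ)) * ((v⁻¹ - v) * Complex.I / 2)
          + ((ε:ℂ)/4) * E * ((b:ℂ) - 1/(b:ℂ)) * ((v + v⁻¹) / 2) := by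
      have hT : ((ε:ℂ)^2 / 16) * (E * E) / (-(((b:ℂ) * (ε:ℂ) / 4) * (v * E)))
          = -((ε:ℂ) * E) * (((b:ℂ))⁻¹ * v⁻¹) / 4 := by
        rw [div_eq_iff (by simp [hbC, hεC, hv, hE])]
        linear_combination (-((ε:ℂ)^2 * E * E * v * v⁻¹ / 16)) * mul_inv_cancel₀ hbC
          + (-((ε:ℂ)^2 * E * E / 16)) * mul_inv_cancel₀ hv
      rw [hT]
      ring_nf
      simp only [Complex.I_sq]
      ring
    have claim2 : ((ε:ℂ)^2 / 16) * (E * E)⁻¹ / (A - ((b:ℂ) * (ε:ℂ) / 4) * (v * E))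
          - ((ε:ℂ)^2 / 16) * (E * E)⁻¹ / A
        = ((ε:ℂ))^3 * G ε := by
      rw [hGε]
      rw [hK] at hAz
      rw [div_sub_div _ _ hAz hA, ← mul_div_assoc, div_eq_div_iff (mul_ne_zero hAz hA)
        (mul_ne_zero (by norm_num) (mul_ne_zero hA hAz))]
      ring
    rw [hg]
    simp only [hK, h2θ, hm2θ, hpi, hsin, hcos]
    rw [show w - (w + ((b:ℂ) * (ε:ℂ) / 4) * (v * E))
          = -(((b:ℂ) * (ε:ℂ) / 4) * (v * E)) by ring,
      show starRingEnd ℂ w - (w + ((b:ℂ) * (ε:ℂ) / 4) * (v * E))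
          = A - ((b:ℂ) * (ε:ℂ) / 4) * (v * E) by rw [hAdef]; ring]
    linear_combination claim1 + claim2
  exact (hmul.congr' EventuallyEq.rfl (by filter_upwards with ε; ring)).congr'
    heq.symm EventuallyEq.rfl
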